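/- Let (k_n), (l_n) be sequences with l_n → ∞ and k_n/l_n → ∞, set f(n) = C(k_n, l_n) (binomial coefficient) and g(n) = k_n / l_n. Suppose the universe is (f,g)-bounded: for every sequence (A_n) with |A_n| = f(n) there exist ℵ₁ sequences B_i = (B_{i,n})_{n<ω} with B_{i,n} ⊆ A_n, |B_{i,n}| < g(n) for all large n, and ∏_n A_n = ⋃_i ∏_n B_{i,n}. Then for every ultrafilter F on ℕ the ultraproduct ∏_n Γ_{k_n, l_n} / F is not ℵ₁-complete. -/

import Mathlib

open Filter

universe u v

lemma nat_lt_omega1 (m : ℕ) : (m : Ordinal.{u}) < (Cardinal.aleph 1).ord :=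
  calc (m : Ordinal.{u}) < Ordinal.omega0 := Ordinal.nat_lt_omega0 _
    _ = Cardinal.aleph0.ord := Cardinal.ord_aleph0.symm
    _ ≤ (Cardinal.aleph 1).ord := Cardinal.ord_le_ord.2 (Cardinal.aleph0_le_aleph 1)

lemma omega1_lift : Ordinal.lift.{u, 0} (Cardinal.aleph 1).ord = (Cardinal.aleph 1).ord := by
  rw [Cardinal.lift_ord, Cardinal.lift_aleph, Ordinal.lift_one]

lemma up_surj : Function.Surjective
    (fun o : {o : Ordinal.{0} // o < (Cardinal.aleph 1).ord} =>
      (⟨Ordinal.lift.{u,0} o.1, lt_of_lt_of_eq (Ordinal.lift_lt.2 o.2) omega1_lift⟩ :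
        {o : Ordinal.{u} // o < (Cardinal.aleph 1).ord})) := by
  rintro ⟨o', ho'⟩
  have h1 : o' ≤ Ordinal.lift.{u,0} (Cardinal.aleph 1).ord := by
    rw [omega1_lift]; exact ho'.le
  obtain ⟨a, ha⟩ := Ordinal.mem_range_lift_of_le h1
  have ha' : a < (Cardinal.aleph 1).ord := by
    rw [← Ordinal.lift_lt.{u,0}, ha, omega1_lift]; exact ho'
  exact ⟨⟨a, ha'⟩, Subtype.ext ha⟩

lemma index_surj : ∃ φ : {o : Ordinal.{u} // o < (Cardinal.aleph 1).ord} →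
    {o : Ordinal.{v} // o < (Cardinal.aleph 1).ord}, Function.Surjective φ := by
  haveI : Nonempty {o : Ordinal.{0} // o < (Cardinal.aleph 1).ord} :=
    ⟨⟨0, by simpa using nat_lt_omega1 0⟩⟩
  set upu : {o : Ordinal.{0} // o < (Cardinal.aleph 1).ord} →
      {o : Ordinal.{u} // o < (Cardinal.aleph 1).ord} :=
    fun o => ⟨Ordinal.lift.{u,0} o.1, lt_of_lt_of_eq (Ordinal.lift_lt.2 o.2) omega1_lift⟩
  set upv : {o : Ordinal.{0} // o < (Cardinal.aleph 1).ord} →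
      {o : Ordinal.{v} // o < (Cardinal.aleph 1).ord} :=
    fun o => ⟨Ordinal.lift.{v,0} o.1, lt_of_lt_of_eq (Ordinal.lift_lt.2 o.2) omega1_lift⟩
  have hinj : Function.Injective upu := by
    intro o1 o2 h
    exact Subtype.ext (Ordinal.lift_inj.1 (congrArg Subtype.val h))
  have hdown : Function.Surjective (Function.invFun upu) :=
    Function.LeftInverse.surjective (Function.leftInverse_invFun hinj)
  exact ⟨upv ∘ Function.invFun upu, (up_surj.{v}).comp hdown⟩

lemma avoid_lemma {k l : ℕ} (D : Finset (Finset (Fin k)))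
    (hcard : ∀ S ∈ D, S.card = l) (hD : l * D.card < k) :
    ∃ m : Fin k, ∀ S ∈ D, m ∉ S := by
  by_contra h
  push_neg at h
  have hsub : (Finset.univ : Finset (Fin k)) ⊆ D.biUnion id := by
    intro m _
    obtain ⟨S, hS, hm⟩ := h m
    exact Finset.mem_biUnion.2 ⟨S, hS, hm⟩
  have h1 : k ≤ (D.biUnion id).card := by
    simpa using Finset.card_le_card hsub
  have h2 : (D.biUnion id).card ≤ D.card * l := by
    calc (D.biUnion id).card ≤ ∑ S ∈ D, S.card := Finset.card_biUnion_le
      _ ≤ D.card * l := by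
          have := Finset.sum_le_card_nsmul D (fun S => S.card) l
            (fun S hS => (hcard S hS).le)
          simpa using this
  exact (h1.trans h2).not_gt (by rwa [mul_comm] at hD)

/-- Let `l n → ∞` and `k n / l n → ∞` (with `l n < k n`), set
`f(n) = C(k n, l n)` and `g(n) = k n / l n`. Suppose the universe is `(f,g)`-bounded.
Then for every ultrafilter `F` on `ℕ`, the ultraproduct `∏ Γ_{k n, l n} / F` is not
ℵ₁-complete: it is not the case that every `ω₁`-indexed family of elements of the
`U`-part is linked to a single common element of the `V`-part. -/
theorem stmt_8 (k l : ℕ → ℕ) (hlk : ∀ n, l n < k n)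
    (hl : Tendsto l atTop atTop)
    (hg : Tendsto (fun n => k n / l n) atTop atTop)
    -- the universe is `(f,g)`-bounded with `f n = C(k n, l n)`, `g n = k n / l n`:
    (bounded : ∀ A : ℕ → Finset ℕ, (∀ n, (A n).card = (k n).choose (l n)) →
      ∃ B : {o : Ordinal // o < (Cardinal.aleph 1).ord} → ℕ → Finset ℕ,
        (∀ i n, B i n ⊆ A n) ∧
        (∀ i, ∀ᶠ n in atTop, (B i n).card < k n / l n) ∧
        (∀ x : ℕ → ℕ, (∀ n, x n ∈ A n) → ∃ i, ∀ n, x n ∈ B i n))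
    (F : Ultrafilter ℕ) :
    ¬ (∀ a : {o : Ordinal // o < (Cardinal.aleph 1).ord} → (n : ℕ) → Fin (k n),
        ∃ b : (n : ℕ) → Finset (Fin (k n)), (∀ n, (b n).card = l n) ∧
          ∀ i, {n : ℕ | a i n ∈ b n} ∈ F) := by
  intro H
  have hkpos : ∀ n, 0 < k n := fun n => Nat.lt_of_le_of_lt (Nat.zero_le _) (hlk n)
  by_cases hfree : (F : Filter ℕ) ≤ cofinite
  · -- main case: F contains all cofinite sets
    set C : ℕ → ℕ := fun n => (k n).choose (l n) with hC
    set P : (n : ℕ) → Finset (Finset (Fin (k n))) :=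
      fun n => Finset.powersetCard (l n) Finset.univ with hPdef
    have hPcard : ∀ n, (P n).card = C n := by
      intro n; simp [hPdef, hC, Finset.card_powersetCard]
    have e : ∀ n, ↥(P n) ≃ Fin (C n) := fun n => (P n).equivFinOfCardEq (hPcard n)
    obtain ⟨B, hBsub, hBsmall, hBcover⟩ :=
      bounded (fun n => Finset.range (C n)) (fun n => Finset.card_range _)
    obtain ⟨φ, hφ⟩ := index_surj
    have hBlt : ∀ i n x, x ∈ B i n → x < C n := by
      intro i n x hx
      simpa using hBsub i n hx
    set D : {o : Ordinal // o < (Cardinal.aleph 1).ord} → (n : ℕ) →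
        Finset (Finset (Fin (k n))) :=
      fun i n => (B i n).attach.image
        (fun x => (((e n).symm ⟨x.1, hBlt i n x.1 x.2⟩ : ↥(P n)) : Finset (Fin (k n))))
      with hDdef
    have hDmem : ∀ i n S, S ∈ D i n → S.card = l n := by
      intro i n S hS
      simp only [hDdef, Finset.mem_image] at hS
      obtain ⟨x, _, rfl⟩ := hS
      have h2 : (((e n).symm ⟨x.1, hBlt i n x.1 x.2⟩ : ↥(P n)) : Finset (Fin (k n))) ∈
          Finset.powersetCard (l n) (Finset.univ : Finset (Fin (k n))) :=
        ((e n).symm ⟨x.1, hBlt i n x.1 x.2⟩).2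
      exact (Finset.mem_powersetCard.1 h2).2
    set a : {o : Ordinal // o < (Cardinal.aleph 1).ord} → (n : ℕ) → Fin (k n) :=
      fun i n => if h : ∃ m : Fin (k n), ∀ S ∈ D (φ i) n, m ∉ S then h.choose
        else ⟨0, hkpos n⟩ with hadef
    obtain ⟨b, hbcard, hbmem⟩ := H a
    have hbP : ∀ n, b n ∈ P n := by
      intro n
      exact Finset.mem_powersetCard.mpr ⟨Finset.subset_univ _, hbcard n⟩
    set x : ℕ → ℕ := fun n => ((e n) ⟨b n, hbP n⟩ : Fin (C n)).1 with hxdef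
    obtain ⟨i₁, hi₁⟩ := hBcover x (fun n => Finset.mem_range.2 ((e n) ⟨b n, hbP n⟩).2)
    obtain ⟨i₂, hi₂⟩ := hφ i₁
    -- b n ∈ D i₁ n for every n
    have hbD : ∀ n, b n ∈ D i₁ n := by
      intro n
      simp only [hDdef, Finset.mem_image]
      refine ⟨⟨x n, hi₁ n⟩, Finset.mem_attach _ _, ?_⟩
      have hfin : (⟨x n, hBlt i₁ n (x n) (hi₁ n)⟩ : Fin (C n)) = (e n) ⟨b n, hbP n⟩ := by
        apply Fin.ext; rfl
      rw [hfin, Equiv.symm_apply_apply]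
    have hS2 : {n | (B i₁ n).card < k n / l n} ∈ F := by
      apply hfree
      have := hBsmall i₁
      rwa [← Nat.cofinite_eq_atTop] at this
    have hS1 := hbmem i₂
    obtain ⟨n, hn1, hn2⟩ := Ultrafilter.nonempty_of_mem (Filter.inter_mem hS1 hS2)
    have hn1' : a i₂ n ∈ b n := hn1
    have hn2' : (B i₁ n).card < k n / l n := hn2
    have hlpos : 0 < l n := by
      rcases Nat.eq_zero_or_pos (l n) with h0 | h0
      · rw [h0, Nat.div_zero] at hn2'; omega
      · exact h0
    have hmul : l n * (D i₁ n).card < k n := by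
      have hc1 : (D i₁ n).card ≤ (B i₁ n).card := by
        calc (D i₁ n).card ≤ (B i₁ n).attach.card := Finset.card_image_le
          _ = (B i₁ n).card := Finset.card_attach
      have hc2 : (B i₁ n).card + 1 ≤ k n / l n := hn2'
      have hc3 : l n * ((B i₁ n).card + 1) ≤ l n * (k n / l n) :=
        Nat.mul_le_mul_left _ hc2
      have hc4 : l n * (k n / l n) ≤ k n := Nat.mul_div_le _ _
      have hc5 := Nat.mul_le_mul_left (l n) hc1
      nlinarith
    have hex : ∃ m : Fin (k n), ∀ S ∈ D i₁ n, m ∉ S :=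
      avoid_lemma (D i₁ n) (hDmem i₁ n) hmul
    have hval : a i₂ n = hex.choose := by
      simp only [hadef]
      rw [hi₂, dif_pos hex]
    rw [hval] at hn1'
    exact hex.choose_spec (b n) (hbD n) hn1'
  · -- principal case: F = pure n0
    rw [Filter.le_def] at hfree
    push_neg at hfree
    obtain ⟨s, hs, hsF⟩ := hfree
    have hsc : sᶜ ∈ F := (Ultrafilter.compl_mem_iff_notMem).2 hsF
    have hscfin : (sᶜ : Set ℕ).Finite := by
      rwa [Filter.mem_cofinite] at hs
    obtain ⟨n0, _, hF0⟩ := Ultrafilter.eq_pure_of_finite_mem hscfin hsc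
    set a : {o : Ordinal // o < (Cardinal.aleph 1).ord} → (n : ℕ) → Fin (k n) :=
      fun i n => if h : ∃ j : Fin (k n), ((j : ℕ) : Ordinal) = i.1 then h.choose
        else ⟨0, hkpos n⟩ with hadef
    obtain ⟨b, hbcard, hbmem⟩ := H a
    have hcover : ∀ j : Fin (k n0), j ∈ b n0 := by
      intro j
      set i : {o : Ordinal // o < (Cardinal.aleph 1).ord} :=
        ⟨((j : ℕ) : Ordinal), nat_lt_omega1 _⟩ with hidef
      have hmem := hbmem i
      rw [hF0] at hmem
      have hn0 : a i n0 ∈ b n0 := hmem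
      have hexj : ∃ j' : Fin (k n0), ((j' : ℕ) : Ordinal) = i.1 := ⟨j, rfl⟩
      have hval : a i n0 = hexj.choose := by
        simp only [hadef]
        rw [dif_pos hexj]
      have hj' : hexj.choose = j := by
        have h1 : ((hexj.choose : ℕ) : Ordinal) = ((j : ℕ) : Ordinal) := hexj.choose_spec
        exact Fin.ext (Nat.cast_injective h1)
      rw [hval, hj'] at hn0
      exact hn0
    have hge : k n0 ≤ (b n0).card := by
      have hsub : (Finset.univ : Finset (Fin (k n0))) ⊆ b n0 := fun j _ => hcover j
      simpa using Finset.card_le_card hsub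
    rw [hbcard n0] at hge
    exact absurd (hlk n0) (not_lt.2 hge)
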